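/- Let I be an information function on a category C with finite products and terminal object T. If f : A → C is a morphism and B any object, then I(f ∘ π_A) = I(f), where π_A : A × B → A is the projection. -/

import Mathlib

open CategoryTheory Limits

/-- The binary fan in the arrow category over `Arrow.mk f` and `Arrow.mk g`
with apex `Arrow.mk (prod.map f g)`. -/
noncomputable def arrowProdFan {C : Type*} [Category C] [HasFiniteProducts C]
    {A X B Y : C} (f : A ⟶ X) (g : B ⟶ Y) :
    BinaryFan (Arrow.mk f) (Arrow.mk g) :=
  BinaryFan.mk (P := Arrow.mk (prod.map f g))
    (Arrow.homMk' (u := prod.fst) (v := prod.fst) (by simp))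
    (Arrow.homMk' (u := prod.snd) (v := prod.snd) (by simp))

noncomputable def arrowProdFanIsLimit {C : Type*} [Category C] [HasFiniteProducts C]
    {A X B Y : C} (f : A ⟶ X) (g : B ⟶ Y) :
    IsLimit (arrowProdFan f g) := by
  apply BinaryFan.isLimitMk
    (lift := fun s => Arrow.homMk
      (u := prod.lift s.fst.left s.snd.left) (v := prod.lift s.fst.right s.snd.right)
      (by
        apply Limits.prod.hom_ext
        · (show (prod.lift (W := s.pt.left) (X := A) (Y := B) s.fst.left s.snd.left ≫ prod.map f g) ≫ (prod.fst : X ⨯ Y ⟶ X) = (s.pt.hom ≫ prod.lift (W := s.pt.right) (X := X) (Y := Y) s.fst.right s.snd.right) ≫ (prod.fst : X ⨯ Y ⟶ X)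
           simpa [prod.lift_fst] using s.fst.w)
        · (show (prod.lift (W := s.pt.left) (X := A) (Y := B) s.fst.left s.snd.left ≫ prod.map f g) ≫ (prod.snd : X ⨯ Y ⟶ Y) = (s.pt.hom ≫ prod.lift (W := s.pt.right) (X := X) (Y := Y) s.fst.right s.snd.right) ≫ (prod.snd : X ⨯ Y ⟶ Y)
           simpa [prod.lift_snd] using s.snd.w)))
  · intro s
    apply CommaMorphism.ext <;> (simp [arrowProdFan]; exact prod.lift_fst _ _)
  · intro s
    apply CommaMorphism.ext <;> (simp [arrowProdFan]; exact prod.lift_snd _ _)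
  · intro s m h1 h2
    apply CommaMorphism.ext
    · apply Limits.prod.hom_ext
      · erw [prod.lift_fst]; simpa [arrowProdFan] using congrArg CommaMorphism.left h1
      · erw [prod.lift_snd]; simpa [arrowProdFan] using congrArg CommaMorphism.left h2
    · apply Limits.prod.hom_ext
      · erw [prod.lift_fst]; simpa [arrowProdFan] using congrArg CommaMorphism.right h1
      · erw [prod.lift_snd]; simpa [arrowProdFan] using congrArg CommaMorphism.right h2

theorem info_comp_proj {C : Type*} [Category C] [HasFiniteProducts C]
    (I : ∀ ⦃X Y : C⦄, (X ⟶ Y) → ℝ)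
    (nonneg : ∀ {X Y : C} (f : X ⟶ Y), 0 ≤ I f)
    (invariance : ∀ {f g : Arrow C}, (f ≅ g) → I f.hom = I g.hom)
    (extAdd : ∀ (f g : Arrow C) (c : BinaryFan f g), IsLimit c →
      I c.pt.hom = I f.hom + I g.hom)
    (issa : ∀ {A : C} (f g h : Under A) (cfg : BinaryFan f g) (cgh : BinaryFan g h)
      (cfgh : BinaryFan cfg.pt h), IsLimit cfg → IsLimit cgh → IsLimit cfgh →
      I cfgh.pt.hom ≤ I cfg.pt.hom + I cgh.pt.hom - I g.hom)
    (mono : ∀ {X Y Z : C} (f : X ⟶ Y) (g : Y ⟶ Z),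
      I (f ≫ g) ≤ I f ∧ (I (f ≫ g) = I f ↔ ∃ s : Z ⟶ Y, f ≫ g ≫ s = f))
    (destMatch : ∀ {X Y : C} (f : X ⟶ Y), I f ≤ I (𝟙 Y)) :
    ∀ {A X : C} (f : A ⟶ X) (B : C),
      I ((prod.fst : A ⨯ B ⟶ A) ≫ f) = I f := by
  intro A X f B
  -- I (𝟙 (⊤_ C)) = 0
  have hTT : I (prod.map (𝟙 (⊤_ C)) (𝟙 (⊤_ C))) = I (𝟙 (⊤_ C)) + I (𝟙 (⊤_ C)) :=
    extAdd _ _ _ (arrowProdFanIsLimit (𝟙 (⊤_ C)) (𝟙 (⊤_ C)))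
  have hiso : I (prod.map (𝟙 (⊤_ C)) (𝟙 (⊤_ C))) = I (𝟙 (⊤_ C)) := by
    have e : Limits.prod (⊤_ C) (⊤_ C) ≅ (⊤_ C) :=
      { hom := prod.fst
        inv := prod.lift (𝟙 _) (𝟙 _)
        hom_inv_id := by apply Limits.prod.hom_ext <;> apply terminal.hom_ext
        inv_hom_id := by apply terminal.hom_ext }
    have : (Arrow.mk (prod.map (𝟙 (⊤_ C)) (𝟙 (⊤_ C)))) ≅ Arrow.mk (𝟙 (⊤_ C)) :=
      Arrow.isoMk e e (by apply terminal.hom_ext)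
    simpa using invariance this
  have hI1 : I (𝟙 (⊤_ C)) = 0 := by linarith [hTT, hiso]
  -- I (terminal.from B) = 0
  have hB : I (terminal.from B) = 0 :=
    le_antisymm (hI1 ▸ destMatch (terminal.from B)) (nonneg _)
  -- additivity
  have hadd : I (prod.map f (terminal.from B)) = I f + I (terminal.from B) :=
    extAdd _ _ _ (arrowProdFanIsLimit f (terminal.from B))
  -- isomorphism between fst ≫ f and prod.map f (terminal.from B)
  have hiso2 : I ((prod.fst : A ⨯ B ⟶ A) ≫ f) = I (prod.map f (terminal.from B)) := by
    have : (Arrow.mk ((prod.fst : A ⨯ B ⟶ A) ≫ f)) ≅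
        Arrow.mk (prod.map f (terminal.from B)) := by
      refine Arrow.isoMk (Iso.refl _)
        (Iso.mk (prod.lift (𝟙 X) (terminal.from X)) prod.fst ?_ ?_) ?_
      · simp [prod.lift_fst, prod.lift_snd, prod.lift_fst_assoc, prod.lift_snd_assoc]
      · apply Limits.prod.hom_ext
        · simp [prod.lift_fst, prod.lift_snd, prod.lift_fst_assoc, prod.lift_snd_assoc]
        · apply terminal.hom_ext
      · apply Limits.prod.hom_ext <;> simp [prod.lift_fst, prod.lift_snd, prod.lift_fst_assoc, prod.lift_snd_assoc]
    simpa using invariance this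
  rw [hiso2, hadd, hB, add_zero]
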